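/- Uniform lower eigenvalue bound for the local polynomial Gram matrices: let the kernel K : ℝ² → [0,∞) have compact support in [−1,1]² and satisfy K_min 𝟙{−Δ ≤ u₁,u₂ ≤ Δ} ≤ K(u₁,u₂) ≤ K_max for constants Δ, K_min, K_max > 0, and let the design points satisfy Assumption 4. Then there exist a sufficiently large p₀ ∈ ℕ, a sufficiently small h₀ > 0, a sufficiently large constant c > 0 and a universal constant λ₀ > 0 such that for all p ≥ p₀, all h ∈ (c/p, h₀] and all x, y ∈ [0,1] with x ≤ y, the smallest eigenvalue of the symmetric positive semidefinite matrix B_{p,h}(x,y) := (ph)^{-2} Σ_{j<k} U_m((x_j−x)/h, (x_k−y)/h) U_m((x_j−x)/h, (x_k−y)/h)ᵀ K((x_j−x)/h, (x_k−y)/h) ∈ ℝ^{N_m×N_m} is bounded below by λ₀. -/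

import Mathlib

open Set

/-- The closed upper triangle `T = {(x,y) ∈ [0,1]² : x ≤ y}`. -/
def upperT : Set (ℝ × ℝ) :=
  {z | z.1 ∈ Set.Icc (0:ℝ) 1 ∧ z.2 ∈ Set.Icc (0:ℝ) 1 ∧ z.1 ≤ z.2}

/-- Sum over pairs `j < k` of design indices. -/
def pairSum {p : ℕ} (g : Fin p → Fin p → ℝ) : ℝ :=
  ∑ j : Fin p, ∑ k : Fin p, if j < k then g j k else 0

/-- Assumption 4 (design density). -/
def DesignQuantile {p : ℕ} (f : ℝ → ℝ) (fmin fmax : ℝ) (x : Fin p → ℝ) : Prop :=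
  0 < fmin ∧ fmin ≤ fmax ∧
  (∃ Kf : NNReal, LipschitzOnWith Kf f (Set.Icc 0 1)) ∧
  (∀ t ∈ Set.Icc (0:ℝ) 1, fmin ≤ f t ∧ f t ≤ fmax) ∧
  (∫ t in (0:ℝ)..1, f t) = 1 ∧
  ∀ j : Fin p, x j ∈ Set.Icc (0:ℝ) 1 ∧
    (∫ t in (0:ℝ)..(x j), f t) = ((j : ℝ) + 1 - 0.5) / p

/-- Index set of the monomials `u₁^{r₁}u₂^{r₂}/(r₁! r₂!)` of total degree `r₁ + r₂ ≤ m`;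
it has cardinality `N_m = (m+1)(m+2)/2`. -/
def MIdx (m : ℕ) := {q : Fin (m + 1) × Fin (m + 1) // (q.1 : ℕ) + (q.2 : ℕ) ≤ m}

instance (m : ℕ) : Fintype (MIdx m) := by unfold MIdx; infer_instance
instance (m : ℕ) : DecidableEq (MIdx m) := by unfold MIdx; infer_instance

/-- The entries of the vector `U_m(u₁,u₂)` of factorial-weighted monomials. -/
noncomputable def Umon (m : ℕ) (q : MIdx m) (u : ℝ × ℝ) : ℝ :=
  u.1 ^ (q.1.1 : ℕ) * u.2 ^ (q.1.2 : ℕ) /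
    (((q.1.1 : ℕ).factorial : ℝ) * ((q.1.2 : ℕ).factorial : ℝ))

/-- The Gram matrix `B_{p,h}(x,y)` of the restricted bivariate local polynomial estimator. -/
noncomputable def gramB {p : ℕ} (m : ℕ) (K : ℝ × ℝ → ℝ) (x : Fin p → ℝ) (h : ℝ)
    (z : ℝ × ℝ) : Matrix (MIdx m) (MIdx m) ℝ :=
  Matrix.of fun q r => (1 / ((p : ℝ) * h) ^ 2) * pairSum (fun j k =>
    Umon m q ((x j - z.1) / h, (x k - z.2) / h) *
      Umon m r ((x j - z.1) / h, (x k - z.2) / h) *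
        K ((x j - z.1) / h, (x k - z.2) / h))

/-! ### Auxiliary lemmas -/

/-- extend `v : MIdx m → ℝ` by zero to the full square of indices. -/
noncomputable def vext {m : ℕ} (v : MIdx m → ℝ) (q : Fin (m+1) × Fin (m+1)) : ℝ :=
  if h : (q.1 : ℕ) + (q.2 : ℕ) ≤ m then v ⟨q, h⟩ else 0

lemma sum_midx_eq {m : ℕ} (g : Fin (m+1) × Fin (m+1) → ℝ) :
    ∑ q : MIdx m, g q.1 = ∑ q : Fin (m+1) × Fin (m+1), (if (q.1:ℕ)+(q.2:ℕ) ≤ m then g q else 0) := by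
  rw [← Finset.sum_filter]
  exact (Finset.sum_subtype (Finset.univ.filter fun q : Fin (m+1) × Fin (m+1) => (q.1:ℕ)+(q.2:ℕ) ≤ m)
    (by simp) fun q => g q).symm

lemma sum_midx_umon {m : ℕ} (v : MIdx m → ℝ) (u : ℝ × ℝ) :
    ∑ q : MIdx m, v q * Umon m q u =
      ∑ q1 : Fin (m+1), ∑ q2 : Fin (m+1), vext v (q1, q2) *
        (u.1 ^ (q1:ℕ) * u.2 ^ (q2:ℕ) / (((q1:ℕ).factorial : ℝ) * ((q2:ℕ).factorial : ℝ))) := by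
  have e1 : ∑ q : MIdx m, v q * Umon m q u =
      ∑ q : MIdx m, (fun q' : Fin (m+1) × Fin (m+1) => vext v q' *
        (u.1 ^ (q'.1:ℕ) * u.2 ^ (q'.2:ℕ) /
          (((q'.1:ℕ).factorial : ℝ) * ((q'.2:ℕ).factorial : ℝ)))) q.1 := by
    refine Finset.sum_congr rfl fun q _ => ?_
    simp [vext, q.2, Umon]; exact Or.inl rfl
  rw [e1, sum_midx_eq (fun q' : Fin (m+1) × Fin (m+1) => vext v q' *
    (u.1 ^ (q'.1:ℕ) * u.2 ^ (q'.2:ℕ) /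
      (((q'.1:ℕ).factorial : ℝ) * ((q'.2:ℕ).factorial : ℝ))))]
  rw [Fintype.sum_prod_type (f := fun q : Fin (m+1) × Fin (m+1) =>
    if (q.1:ℕ)+(q.2:ℕ) ≤ m then vext v q *
      (u.1 ^ (q.1:ℕ) * u.2 ^ (q.2:ℕ) / (((q.1:ℕ).factorial : ℝ) * ((q.2:ℕ).factorial : ℝ))) else 0)]
  refine Finset.sum_congr rfl fun q1 _ => Finset.sum_congr rfl fun q2 _ => ?_
  by_cases h : (q1:ℕ)+(q2:ℕ) ≤ m
  · simp [h]
  · simp [h, vext]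

lemma biv_vanish {m : ℕ} (v : MIdx m → ℝ) (t s : Fin (m+1) → ℝ)
    (ht : Function.Injective t) (hs : Function.Injective s)
    (hz : ∀ i i' : Fin (m+1), ∑ q : MIdx m, v q * Umon m q (t i, s i') = 0) : v = 0 := by
  have key : ∀ i' i : Fin (m+1),
      ∑ q1 : Fin (m+1), (∑ q2 : Fin (m+1),
        (vext v (q1, q2) / (((q1:ℕ).factorial : ℝ) * ((q2:ℕ).factorial : ℝ))) * s i' ^ (q2:ℕ))
          * t i ^ (q1:ℕ) = 0 := by
    intro i' i
    rw [← hz i i', sum_midx_umon]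
    refine Finset.sum_congr rfl fun q1 _ => ?_
    rw [Finset.sum_mul]
    refine Finset.sum_congr rfl fun q2 _ => by ring
  have h1 : ∀ q1 : Fin (m+1), ∀ i' : Fin (m+1),
      ∑ q2 : Fin (m+1), (vext v (q1, q2) / (((q1:ℕ).factorial : ℝ) * ((q2:ℕ).factorial : ℝ)))
        * s i' ^ (q2:ℕ) = 0 := by
    intro q1 i'
    exact congrFun (Matrix.eq_zero_of_forall_index_sum_mul_pow_eq_zero ht (key i')) q1
  have h2 : ∀ q1 q2 : Fin (m+1),
      vext v (q1, q2) / (((q1:ℕ).factorial : ℝ) * ((q2:ℕ).factorial : ℝ)) = 0 := by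
    intro q1 q2
    exact congrFun (Matrix.eq_zero_of_forall_index_sum_mul_pow_eq_zero hs (h1 q1)) q2
  funext q
  have h3 := h2 q.1.1 q.1.2
  rw [div_eq_zero_iff] at h3
  rcases h3 with h | h
  · simp [vext, q.2] at h; exact h
  · exact absurd h (by positivity)

lemma inj_of_gaps {m : ℕ} {δ₀ : ℝ} (hδ : 0 < δ₀) {t : Fin (m+1) → ℝ}
    (hg : ∀ i i' : Fin (m+1), i < i' → t i + δ₀ ≤ t i') : Function.Injective t := by
  intro i i' h
  by_contra hne
  rcases lt_trichotomy i i' with hlt | heq | hlt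
  · have := hg i i' hlt; linarith
  · exact hne heq
  · have := hg i' i hlt; linarith

lemma grid_lb (m : ℕ) (Δ δ₀ : ℝ) (hδ : 0 < δ₀) :
    ∃ lam : ℝ, 0 < lam ∧ ∀ (t s : Fin (m+1) → ℝ),
      (∀ i, t i ∈ Icc (-Δ) Δ) → (∀ i i' : Fin (m+1), i < i' → t i + δ₀ ≤ t i') →
      (∀ i, s i ∈ Icc (-Δ) Δ) → (∀ i i' : Fin (m+1), i < i' → s i + δ₀ ≤ s i') →
      ∀ v : MIdx m → ℝ, (∑ q, v q ^ 2 = 1) →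
        lam ≤ ∑ i, ∑ i', (∑ q : MIdx m, v q * Umon m q (t i, s i')) ^ 2 := by
  classical
  set E := ((Fin (m+1) → ℝ) × (Fin (m+1) → ℝ) × (MIdx m → ℝ))
  set g : E → ℝ := fun x => ∑ i, ∑ i', (∑ q : MIdx m, x.2.2 q * Umon m q (x.1 i, x.2.1 i')) ^ 2
    with hg_def
  have hgcont : Continuous g := by
    apply continuous_finset_sum; intro i _
    apply continuous_finset_sum; intro i' _
    apply Continuous.pow
    apply continuous_finset_sum; intro q _
    unfold Umon
    have h1 : Continuous fun x : E => x.2.2 q :=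
      (continuous_apply q).comp (continuous_snd.comp continuous_snd)
    have h2 : Continuous fun x : E => x.1 i :=
      (continuous_apply i).comp continuous_fst
    have h3 : Continuous fun x : E => x.2.1 i' :=
      (continuous_apply i').comp (continuous_fst.comp continuous_snd)
    exact h1.mul (((h2.pow _).mul (h3.pow _)).div_const _)
  set D : Set E := {x : E | (∀ i, x.1 i ∈ Icc (-Δ) Δ) ∧
      (∀ i i' : Fin (m+1), i < i' → x.1 i + δ₀ ≤ x.1 i') ∧
      (∀ i, x.2.1 i ∈ Icc (-Δ) Δ) ∧
      (∀ i i' : Fin (m+1), i < i' → x.2.1 i + δ₀ ≤ x.2.1 i') ∧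
      (∑ q, x.2.2 q ^ 2 = 1)} with hD_def
  have hDclosed : IsClosed D := by
    have c1 : ∀ i : Fin (m+1), Continuous fun x : E => x.1 i :=
      fun i => (continuous_apply i).comp continuous_fst
    have c2 : ∀ i : Fin (m+1), Continuous fun x : E => x.2.1 i :=
      fun i => (continuous_apply i).comp (continuous_fst.comp continuous_snd)
    have c3 : ∀ q : MIdx m, Continuous fun x : E => x.2.2 q :=
      fun q => (continuous_apply q).comp (continuous_snd.comp continuous_snd)
    have : D = (⋂ i, {x : E | x.1 i ∈ Icc (-Δ) Δ}) ∩
        (⋂ i, ⋂ i', {x : E | i < i' → x.1 i + δ₀ ≤ x.1 i'}) ∩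
        (⋂ i, {x : E | x.2.1 i ∈ Icc (-Δ) Δ}) ∩
        (⋂ i, ⋂ i', {x : E | i < i' → x.2.1 i + δ₀ ≤ x.2.1 i'}) ∩
        {x : E | ∑ q, x.2.2 q ^ 2 = 1} := by
      ext x; simp only [hD_def, mem_setOf_eq, mem_inter_iff, mem_iInter]; tauto
    rw [this]
    refine IsClosed.inter (IsClosed.inter (IsClosed.inter (IsClosed.inter ?_ ?_) ?_) ?_) ?_
    · exact isClosed_iInter fun i => IsClosed.preimage (c1 i) isClosed_Icc
    · refine isClosed_iInter fun i => isClosed_iInter fun i' => ?_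
      by_cases h : i < i'
      · simp only [h, true_implies]
        exact isClosed_le (by exact (c1 i).add continuous_const) (c1 i')
      · simp only [h, false_implies, setOf_true]; exact isClosed_univ
    · exact isClosed_iInter fun i => IsClosed.preimage (c2 i) isClosed_Icc
    · refine isClosed_iInter fun i => isClosed_iInter fun i' => ?_
      by_cases h : i < i'
      · simp only [h, true_implies]
        exact isClosed_le (by exact (c2 i).add continuous_const) (c2 i')
      · simp only [h, false_implies, setOf_true]; exact isClosed_univ
    · exact isClosed_eq (by
        apply continuous_finset_sum; intro q _; exact (c3 q).pow 2) continuous_const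
  have hDcompact : IsCompact D := by
    have hK : IsCompact ((Set.univ.pi fun _ : Fin (m+1) => Icc (-Δ) Δ) ×ˢ
        ((Set.univ.pi fun _ : Fin (m+1) => Icc (-Δ) Δ) ×ˢ
          (Set.univ.pi fun _ : MIdx m => Icc (-1:ℝ) 1))) :=
      (isCompact_univ_pi fun _ => isCompact_Icc).prod
        ((isCompact_univ_pi fun _ => isCompact_Icc).prod
          (isCompact_univ_pi fun _ => isCompact_Icc))
    refine hK.of_isClosed_subset hDclosed ?_
    rintro ⟨t, s, v⟩ ⟨h1, _, h3, _, h5⟩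
    refine ⟨fun i _ => h1 i, fun i _ => h3 i, fun q _ => ?_⟩
    have hle : v q ^ 2 ≤ 1 := by
      rw [← h5]
      exact Finset.single_le_sum (fun r _ => sq_nonneg (v r)) (Finset.mem_univ q)
    have habs : |v q| ≤ 1 := (sq_le_one_iff_abs_le_one (v q)).mp hle
    exact abs_le.mp habs
  by_cases hD : D.Nonempty
  · obtain ⟨x₀, hx₀, hmin⟩ := hDcompact.exists_isMinOn hD hgcont.continuousOn
    have hg0 : 0 ≤ g x₀ := by
      apply Finset.sum_nonneg; intro i _
      apply Finset.sum_nonneg; intro i' _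
      exact sq_nonneg _
    have hgpos : 0 < g x₀ := by
      rcases hg0.lt_or_eq with h | h
      · exact h
      · exfalso
        obtain ⟨ht1, ht2, hs1, hs2, hv1⟩ := hx₀
        have hz : ∀ i i' : Fin (m+1),
            ∑ q : MIdx m, x₀.2.2 q * Umon m q (x₀.1 i, x₀.2.1 i') = 0 := by
          intro i i'
          have houter := (Finset.sum_eq_zero_iff_of_nonneg (fun i _ =>
            Finset.sum_nonneg fun i' _ => sq_nonneg _)).mp h.symm i (Finset.mem_univ i)
          have hinner := (Finset.sum_eq_zero_iff_of_nonneg (fun i' _ =>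
            sq_nonneg _)).mp houter i' (Finset.mem_univ i')
          exact pow_eq_zero_iff two_ne_zero |>.mp hinner
        have := biv_vanish x₀.2.2 x₀.1 x₀.2.1 (inj_of_gaps hδ ht2) (inj_of_gaps hδ hs2) hz
        rw [this] at hv1
        simp at hv1
    refine ⟨g x₀, hgpos, ?_⟩
    intro t s h1 h2 h3 h4 v hv1
    exact isMinOn_iff.mp hmin (t, s, v) ⟨h1, h2, h3, h4, hv1⟩
  · refine ⟨1, one_pos, ?_⟩
    intro t s h1 h2 h3 h4 v hv1
    exact absurd ⟨(t, s, v), h1, h2, h3, h4, hv1⟩ hD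

/-- Increment lower bound for the design cdf. -/
lemma design_F {p : ℕ} {f : ℝ → ℝ} {fmin fmax : ℝ} {x : Fin p → ℝ}
    (DQ : DesignQuantile f fmin fmax x) {c d : ℝ} (hc : 0 ≤ c) (hcd : c ≤ d) (hd : d ≤ 1) :
    fmin * (d - c) ≤ (∫ t in (0:ℝ)..d, f t) - (∫ t in (0:ℝ)..c, f t) := by
  obtain ⟨hfmin, _, ⟨Kf, hLip⟩, hbd, _, _⟩ := DQ
  have hcont : ContinuousOn f (Icc 0 1) := hLip.continuousOn
  have hint : ∀ a b : ℝ, 0 ≤ a → b ≤ 1 → a ≤ b → IntervalIntegrable f MeasureTheory.volume a b := by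
    intro a b ha hb hab
    apply ContinuousOn.intervalIntegrable
    apply hcont.mono
    rw [uIcc_of_le hab]
    exact Icc_subset_Icc ha hb
  have hadd : (∫ t in (0:ℝ)..c, f t) + (∫ t in c..d, f t) = ∫ t in (0:ℝ)..d, f t :=
    intervalIntegral.integral_add_adjacent_intervals (hint 0 c le_rfl (hcd.trans hd) hc)
      (hint c d hc hd hcd)
  have hlb : fmin * (d - c) ≤ ∫ t in c..d, f t := by
    have := intervalIntegral.integral_mono_on (μ := MeasureTheory.volume) hcd
      (intervalIntegrable_const (c := fmin)) (hint c d hc hd hcd)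
      (fun t ht => (hbd t ⟨hc.trans ht.1, ht.2.trans hd⟩).1)
    simpa [mul_comm] using this
  linarith

lemma design_quantile_val {p : ℕ} {f : ℝ → ℝ} {fmin fmax : ℝ} {x : Fin p → ℝ}
    (DQ : DesignQuantile f fmin fmax x) (j : Fin p) :
    (∫ t in (0:ℝ)..(x j), f t) = ((j : ℝ) + 0.5) / p := by
  have := (DQ.2.2.2.2.2 j).2
  rw [this]; ring_nf

/-- x j < x k implies j < k. -/
lemma design_mono {p : ℕ} {f : ℝ → ℝ} {fmin fmax : ℝ} {x : Fin p → ℝ}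
    (DQ : DesignQuantile f fmin fmax x) (hp : 0 < p) {j k : Fin p} (h : x j < x k) : j < k := by
  have hmem := fun i => (DQ.2.2.2.2.2 i).1
  have hF : (∫ t in (0:ℝ)..(x j), f t) < ∫ t in (0:ℝ)..(x k), f t := by
    have := design_F DQ (hmem j).1 h.le (hmem k).2
    have hfmin := DQ.1
    nlinarith
  rw [design_quantile_val DQ j, design_quantile_val DQ k] at hF
  have hp' : (0:ℝ) < p := by exact_mod_cast hp
  rw [div_lt_div_iff_of_pos_right hp'] at hF
  have : (j:ℝ) < k := by linarith
  exact_mod_cast this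

/-- Selection of a design point in a subinterval, with explicit index window. -/
lemma design_select {p : ℕ} {f : ℝ → ℝ} {fmin fmax : ℝ} {x : Fin p → ℝ}
    (DQ : DesignQuantile f fmin fmax x) (hp : 0 < p) {a b : ℝ}
    (ha : 0 ≤ a) (hb : b ≤ 1) (hab : a ≤ b)
    (s : ℕ) (hs : (s:ℝ) + 1 ≤ (p:ℝ) * fmin * (b - a)) :
    ∃ j : Fin p, x j ∈ Icc a b ∧
      (p:ℝ) * (∫ t in (0:ℝ)..a, f t) + s < (j:ℝ) + 0.5 ∧
      (j:ℝ) + 0.5 ≤ (p:ℝ) * (∫ t in (0:ℝ)..a, f t) + s + 1 := by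
  have hp' : (0:ℝ) < p := by exact_mod_cast hp
  set F : ℝ → ℝ := fun a => ∫ t in (0:ℝ)..a, f t with hF_def
  have hF0 : F 0 = 0 := intervalIntegral.integral_same
  have hFa0 : 0 ≤ F a := by
    have := design_F DQ le_rfl ha (hab.trans hb)
    have := DQ.1; nlinarith
  have hFab : fmin * (b - a) ≤ F b - F a := design_F DQ ha hab hb
  have hFb1 : F b ≤ 1 := by
    have h1 : F 1 = 1 := DQ.2.2.2.2.1
    have := design_F DQ (ha.trans hab) hb le_rfl
    have := DQ.1; nlinarith
  obtain ⟨n, hn1, hn2⟩ : ∃ n : ℕ, (n:ℝ) ≤ (p:ℝ) * F a + s + 1/2 ∧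
      (p:ℝ) * F a + s + 1/2 < (n:ℝ) + 1 :=
    ⟨⌊(p:ℝ) * F a + s + 1/2⌋₊, Nat.floor_le (by positivity), Nat.lt_floor_add_one _⟩
  have hkey : (n:ℝ) + 0.5 ≤ (p:ℝ) * F b := by
    have : (n:ℝ) + 0.5 ≤ (p:ℝ) * F a + s + 1 := by norm_num; linarith
    nlinarith [hs, hFab]
  have hnp : n < p := by
    have : (n:ℝ) + 0.5 ≤ p := le_trans hkey (by nlinarith)
    by_contra hcon
    push_neg at hcon
    have : (p:ℝ) ≤ n := by exact_mod_cast hcon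
    linarith
  refine ⟨⟨n, hnp⟩, ?_, ?_, ?_⟩
  · have hxj := design_quantile_val DQ ⟨n, hnp⟩
    have hmem := (DQ.2.2.2.2.2 ⟨n, hnp⟩).1
    have hFxj : F (x ⟨n, hnp⟩) = ((n:ℝ) + 0.5) / p := hxj
    have hgt : F a < F (x ⟨n, hnp⟩) := by
      rw [hFxj]
      rw [lt_div_iff₀ hp']
      have : (n:ℝ) + 0.5 > (p:ℝ) * F a + s - 0 := by norm_num; linarith
      nlinarith [Nat.cast_nonneg (α := ℝ) s]
    have hle : F (x ⟨n, hnp⟩) ≤ F b := by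
      rw [hFxj, div_le_iff₀ hp']
      linarith [hkey]
    constructor
    · by_contra hcon
      push_neg at hcon
      have := design_F DQ hmem.1 hcon.le (hab.trans hb)
      have := DQ.1; nlinarith
    · by_contra hcon
      push_neg at hcon
      have := design_F DQ (ha.trans hab) hcon.le hmem.2
      have := DQ.1; nlinarith
  · show (p:ℝ) * F a + s < ((⟨n, hnp⟩ : Fin p) : ℝ) + 0.5
    simp only [Fin.val_mk]
    norm_num; linarith
  · show ((⟨n, hnp⟩ : Fin p) : ℝ) + 0.5 ≤ (p:ℝ) * F a + s + 1
    simp only [Fin.val_mk]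
    norm_num; linarith

lemma quad_expand {p : ℕ} (m : ℕ) (K : ℝ × ℝ → ℝ) (x : Fin p → ℝ) (h : ℝ) (z : ℝ × ℝ)
    (v : MIdx m → ℝ) :
    ∑ q, ∑ r, v q * gramB m K x h z q r * v r
      = (1/((p:ℝ)*h)^2) * ∑ j : Fin p, ∑ k : Fin p, (if j < k then
          (∑ q, v q * Umon m q ((x j - z.1)/h, (x k - z.2)/h))^2 *
            K ((x j - z.1)/h, (x k - z.2)/h) else 0) := by
  set C : ℝ := 1/((p:ℝ)*h)^2
  set U : MIdx m → Fin p → Fin p → ℝ :=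
    fun q j k => Umon m q ((x j - z.1)/h, (x k - z.2)/h) with hU
  set KK : Fin p → Fin p → ℝ := fun j k => K ((x j - z.1)/h, (x k - z.2)/h) with hKK
  have lhs_eq : ∑ q, ∑ r, v q * gramB m K x h z q r * v r
      = ∑ q, ∑ r, ∑ j, ∑ k, (if j < k then C * (v q * U q j k * (v r * U r j k) * KK j k) else 0) := by
    refine Finset.sum_congr rfl fun q _ => Finset.sum_congr rfl fun r _ => ?_
    show v q * (C * pairSum _) * v r = _
    unfold pairSum
    simp only [Finset.mul_sum, Finset.sum_mul]
    refine Finset.sum_congr rfl fun j _ => Finset.sum_congr rfl fun k _ => ?_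
    by_cases hjk : j < k
    · simp only [hjk, if_true]; ring
    · simp only [hjk, if_false, mul_zero, zero_mul]
  have rhs_eq : C * ∑ j : Fin p, ∑ k : Fin p, (if j < k then
          (∑ q, v q * U q j k)^2 * KK j k else 0)
      = ∑ j, ∑ k, ∑ q, ∑ r, (if j < k then C * (v q * U q j k * (v r * U r j k) * KK j k) else 0) := by
    rw [Finset.mul_sum]
    refine Finset.sum_congr rfl fun j _ => ?_
    rw [Finset.mul_sum]
    refine Finset.sum_congr rfl fun k _ => ?_
    by_cases hjk : j < k
    · simp only [hjk, if_true]
      rw [sq, Finset.sum_mul_sum, Finset.sum_mul, Finset.mul_sum]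
      refine Finset.sum_congr rfl fun q _ => ?_
      rw [Finset.sum_mul, Finset.mul_sum]
    · simp only [hjk, if_false, Finset.sum_const_zero, mul_zero]
  have swap : ∑ q : MIdx m, ∑ r : MIdx m, ∑ j : Fin p, ∑ k : Fin p,
        (if j < k then C * (v q * U q j k * (v r * U r j k) * KK j k) else 0)
      = ∑ j : Fin p, ∑ k : Fin p, ∑ q : MIdx m, ∑ r : MIdx m,
        (if j < k then C * (v q * U q j k * (v r * U r j k) * KK j k) else 0) :=
    calc ∑ q : MIdx m, ∑ r : MIdx m, ∑ j : Fin p, ∑ k : Fin p,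
          (if j < k then C * (v q * U q j k * (v r * U r j k) * KK j k) else 0)
        = ∑ q : MIdx m, ∑ j : Fin p, ∑ r : MIdx m, ∑ k : Fin p,
          (if j < k then C * (v q * U q j k * (v r * U r j k) * KK j k) else 0) :=
          Finset.sum_congr rfl fun q _ => Finset.sum_comm
      _ = ∑ j : Fin p, ∑ q : MIdx m, ∑ r : MIdx m, ∑ k : Fin p,
          (if j < k then C * (v q * U q j k * (v r * U r j k) * KK j k) else 0) :=
          Finset.sum_comm
      _ = ∑ j : Fin p, ∑ q : MIdx m, ∑ k : Fin p, ∑ r : MIdx m,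
          (if j < k then C * (v q * U q j k * (v r * U r j k) * KK j k) else 0) :=
          Finset.sum_congr rfl fun j _ => Finset.sum_congr rfl fun q _ => Finset.sum_comm
      _ = ∑ j : Fin p, ∑ k : Fin p, ∑ q : MIdx m, ∑ r : MIdx m,
          (if j < k then C * (v q * U q j k * (v r * U r j k) * KK j k) else 0) :=
          Finset.sum_congr rfl fun j _ => Finset.sum_comm
  rw [lhs_eq, swap, ← rhs_eq]

/-- Select, from each of `m+1` separated blocks of width `δh`, `r` distinct design points. -/
lemma block_select {p mm : ℕ} {f : ℝ → ℝ} {fmin fmax : ℝ} {x : Fin p → ℝ}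
    (DQ : DesignQuantile f fmin fmax x) (hp : 0 < p) (r : ℕ)
    (lo δh : ℝ) (hδh : 0 < δh) (hlo : 0 ≤ lo) (hhi : lo + (2*(mm:ℝ)+1)*δh ≤ 1)
    (hr : (r:ℝ) ≤ (p:ℝ) * fmin * δh) :
    ∃ J : Fin (mm+1) → Fin r → Fin p,
      (∀ (i : Fin (mm+1)) (s : Fin r),
        lo + 2*(i:ℕ)*δh ≤ x (J i s) ∧ x (J i s) ≤ lo + 2*(i:ℕ)*δh + δh) ∧
      Function.Injective (fun w : Fin (mm+1) × Fin r => J w.1 w.2) := by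
  have hsel : ∀ (i : Fin (mm+1)) (s : Fin r), ∃ j : Fin p,
      x j ∈ Icc (lo + 2*(i:ℕ)*δh) (lo + 2*(i:ℕ)*δh + δh) ∧
      (p:ℝ) * (∫ t in (0:ℝ)..(lo + 2*(i:ℕ)*δh), f t) + (s:ℕ) < (j:ℝ) + 0.5 ∧
      (j:ℝ) + 0.5 ≤ (p:ℝ) * (∫ t in (0:ℝ)..(lo + 2*(i:ℕ)*δh), f t) + (s:ℕ) + 1 := by
    intro i s
    have hi : (i:ℝ) ≤ mm := by exact_mod_cast Fin.is_le i
    have ha : 0 ≤ lo + 2*(i:ℕ)*δh := by positivity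
    have hb : lo + 2*(i:ℕ)*δh + δh ≤ 1 := by nlinarith
    have hs : ((s:ℕ):ℝ) + 1 ≤ (p:ℝ) * fmin * (lo + 2*(i:ℕ)*δh + δh - (lo + 2*(i:ℕ)*δh)) := by
      have h1 : ((s:ℕ):ℝ) + 1 ≤ r := by
        have := s.2
        exact_mod_cast Nat.succ_le_of_lt this
      have heq : lo + 2*(i:ℕ)*δh + δh - (lo + 2*(i:ℕ)*δh) = δh := by ring
      rw [heq]; linarith
    exact design_select DQ hp ha hb (by linarith) s hs
  choose J hmem hlow hhigh using hsel
  refine ⟨J, ?_, ?_⟩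
  · intro i s
    exact mem_Icc.mp (hmem i s)
  rintro ⟨i, s⟩ ⟨i2, s2⟩ heq
  simp only at heq
  have hi : i = i2 := by
    by_contra hne
    have hblock : ∀ (i i2 : Fin (mm+1)) (s s2 : Fin r), i < i2 → J i s = J i2 s2 → False := by
      intro i i2 s s2 hlt he
      have h1 : x (J i s) ≤ lo + 2*(i:ℕ)*δh + δh := (mem_Icc.mp (hmem i s)).2
      have h2 : lo + 2*(i2:ℕ)*δh ≤ x (J i2 s2) := (mem_Icc.mp (hmem i2 s2)).1
      rw [he] at h1
      have : ((i:ℕ):ℝ) + 1 ≤ ((i2:ℕ):ℝ) := by exact_mod_cast Nat.succ_le_of_lt hlt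
      nlinarith
    rcases lt_or_gt_of_ne hne with hlt | hlt
    · exact hblock i i2 s s2 hlt heq
    · exact hblock i2 i s2 s hlt heq.symm
  subst hi
  have hs : s = s2 := by
    have h1 := hlow i s
    have h2 := hhigh i s
    have h3 := hlow i s2
    have h4 := hhigh i s2
    rw [heq] at h1 h2
    have hlt1 : ((s:ℕ):ℝ) < (s2:ℕ) + 1 := by linarith
    have hlt2 : ((s2:ℕ):ℝ) < (s:ℕ) + 1 := by linarith
    have he : (s:ℕ) = (s2:ℕ) := by
      have a1 : (s:ℕ) < (s2:ℕ) + 1 := by exact_mod_cast hlt1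
      have a2 : (s2:ℕ) < (s:ℕ) + 1 := by exact_mod_cast hlt2
      omega
    exact Fin.ext he
  rw [hs]

lemma sum4 {n r : ℕ} (g : Fin n → Fin r → Fin n → Fin r → ℝ) :
    ∑ w : (Fin n × Fin r) × (Fin n × Fin r), g w.1.1 w.1.2 w.2.1 w.2.2
      = ∑ s : Fin r, ∑ s' : Fin r, ∑ i : Fin n, ∑ i' : Fin n, g i s i' s' :=
  calc ∑ w : (Fin n × Fin r) × (Fin n × Fin r), g w.1.1 w.1.2 w.2.1 w.2.2
      = ∑ is : Fin n × Fin r, ∑ is' : Fin n × Fin r, g is.1 is.2 is'.1 is'.2 :=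
        Fintype.sum_prod_type _
    _ = ∑ is : Fin n × Fin r, ∑ i' : Fin n, ∑ s' : Fin r, g is.1 is.2 i' s' :=
        Finset.sum_congr rfl fun is _ => Fintype.sum_prod_type _
    _ = ∑ i : Fin n, ∑ s : Fin r, ∑ i' : Fin n, ∑ s' : Fin r, g i s i' s' :=
        Fintype.sum_prod_type _
    _ = ∑ s : Fin r, ∑ i : Fin n, ∑ i' : Fin n, ∑ s' : Fin r, g i s i' s' := Finset.sum_comm
    _ = ∑ s : Fin r, ∑ i : Fin n, ∑ s' : Fin r, ∑ i' : Fin n, g i s i' s' :=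
        Finset.sum_congr rfl fun s _ => Finset.sum_congr rfl fun i _ => Finset.sum_comm
    _ = ∑ s : Fin r, ∑ s' : Fin r, ∑ i : Fin n, ∑ i' : Fin n, g i s i' s' :=
        Finset.sum_congr rfl fun s _ => Finset.sum_comm

set_option maxHeartbeats 1000000 in
/-- **Uniform lower eigenvalue bound for the local polynomial Gram matrices (Lemma 9).**
Let the kernel `K ≥ 0` have compact support in `[−1,1]²` and satisfy
`K_min 𝟙{−Δ ≤ u₁,u₂ ≤ Δ} ≤ K ≤ K_max`, and let the design satisfy Assumption 4.  Then there
are `p₀ ∈ ℕ`, `h₀ > 0`, `c > 0` and a universal `λ₀ > 0` such that for all `p ≥ p₀`,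
`h ∈ (c/p, h₀]` and `(x,y) ∈ T`, the smallest eigenvalue of the symmetric positive
semidefinite matrix `B_{p,h}(x,y)` is bounded below by `λ₀` (expressed here through the
quadratic form: `λ₀ ‖v‖² ≤ vᵀ B_{p,h}(x,y) v` for all `v`). -/
theorem gram_matrix_eigenvalue_lower_bound
    (m : ℕ) (K : ℝ × ℝ → ℝ) (Δ Kmin Kmax : ℝ)
    (hΔ : 0 < Δ) (hKmin : 0 < Kmin) (hKmax : 0 < Kmax)
    (hK0 : ∀ u, 0 ≤ K u)
    (hKsupp : ∀ u : ℝ × ℝ, ¬(|u.1| ≤ 1 ∧ |u.2| ≤ 1) → K u = 0)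
    (hKbd : ∀ u : ℝ × ℝ, K u ≤ Kmax ∧
      (u.1 ∈ Set.Icc (-Δ) Δ → u.2 ∈ Set.Icc (-Δ) Δ → Kmin ≤ K u))
    (f : ℝ → ℝ) (fmin fmax : ℝ) :
    ∃ (p₀ : ℕ) (h₀ c lam₀ : ℝ), 0 < h₀ ∧ 0 < c ∧ 0 < lam₀ ∧
      ∀ (p : ℕ), p₀ ≤ p → ∀ x : Fin p → ℝ, DesignQuantile f fmin fmax x →
      ∀ h ∈ Set.Ioc (c / p) h₀, ∀ z ∈ upperT, ∀ v : MIdx m → ℝ,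
        lam₀ * ∑ q, v q ^ 2 ≤ ∑ q, ∑ r, v q * gramB m K x h z q r * v r := by
  classical
  by_cases hf : 0 < fmin
  case neg =>
    refine ⟨1, 1, 1, 1, one_pos, one_pos, one_pos, ?_⟩
    intro p hp x DQ
    exact absurd DQ.1 hf
  obtain ⟨δ₀, hδ₀, hδ₀eq⟩ : ∃ d : ℝ, 0 < d ∧ (2*(m:ℝ)+2) * d = Δ/4 :=
    ⟨Δ/(8*((m:ℝ)+1)), by positivity, by field_simp; ring⟩
  obtain ⟨lam', hlam', Hgrid⟩ := grid_lb m Δ δ₀ hδ₀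
  refine ⟨1, 1/(2*Δ), max (2/(fmin*δ₀)) 1, Kmin * lam' * (fmin*δ₀/2)^2,
    by positivity, lt_of_lt_of_le one_pos (le_max_right _ _), by positivity, ?_⟩
  intro p hp x DQ h hh z hz v
  obtain ⟨hz1, hz2, hz12⟩ := hz
  have hp0 : 0 < p := hp
  have hp' : (0:ℝ) < p := by exact_mod_cast hp0
  have hcpos : (0:ℝ) < max (2/(fmin*δ₀)) 1 := lt_of_lt_of_le one_pos (le_max_right _ _)
  have hh0 : 0 < h := lt_trans (div_pos hcpos hp') hh.1
  have hph : max (2/(fmin*δ₀)) 1 < (p:ℝ) * h := by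
    have h1 := hh.1
    rw [div_lt_iff₀ hp'] at h1
    linarith
  have hph0 : 0 < (p:ℝ) * h := lt_trans hcpos hph
  have h2 : 2 < fmin * δ₀ * ((p:ℝ)*h) := by
    have h1 : 2/(fmin*δ₀) < (p:ℝ)*h := lt_of_le_of_lt (le_max_left _ _) hph
    rw [div_lt_iff₀ (by positivity)] at h1
    linarith
  have hΔh : Δ * h ≤ 1/2 := by
    have h1 := hh.2
    rw [le_div_iff₀ (by positivity)] at h1
    linarith
  have hΔh0 : 0 < Δ * h := by positivity
  obtain ⟨α, β, hα0, hαz, hαl, hβ1, hβz, hβu, hgap⟩ : ∃ α β : ℝ,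
      0 ≤ α ∧ α ≤ z.1 ∧ z.1 - Δ*h ≤ α ∧ β ≤ 1 ∧ z.2 ≤ β ∧ β ≤ z.2 + Δ*h ∧ Δ*h ≤ β - α := by
    refine ⟨max (z.1 - Δ*h) 0, min (z.2 + Δ*h) 1, le_max_right _ _,
      max_le (by linarith) hz1.1, le_max_left _ _, min_le_right _ _,
      le_min (by linarith) hz2.2, min_le_left _ _, ?_⟩
    rcases max_cases (z.1 - Δ*h) 0 with ⟨e1, he1⟩ | ⟨e1, he1⟩ <;>
      rcases min_cases (z.2 + Δ*h) 1 with ⟨e2, he2⟩ | ⟨e2, he2⟩ <;> rw [e1, e2] <;>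
      linarith [hz1.1, hz1.2, hz2.1, hz2.2]
  obtain ⟨r, hr1, hr2⟩ : ∃ r : ℕ, (r:ℝ) ≤ fmin * δ₀ * ((p:ℝ)*h) ∧
      fmin * δ₀ * ((p:ℝ)*h) ≤ 2*r := by
    refine ⟨⌊fmin * δ₀ * ((p:ℝ)*h)⌋₊, Nat.floor_le (by positivity), ?_⟩
    have g1 := Nat.lt_floor_add_one (fmin * δ₀ * ((p:ℝ)*h))
    linarith [g1, h2]
  have hr3 : (fmin*δ₀*((p:ℝ)*h)/2)^2 ≤ (r:ℝ)^2 :=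
    pow_le_pow_left₀ (by positivity) (by linarith [hr2]) 2
  have hfin := mul_le_mul_of_nonneg_left hr3
    (show (0:ℝ) ≤ Kmin * lam' * (∑ q, v q ^ 2) from by positivity)
  have hnum : Kmin * lam' * (fmin*δ₀/2)^2 * ∑ q, v q ^ 2
      ≤ (1/((p:ℝ)*h)^2) * (Kmin * ((r:ℝ)^2 * (lam' * ∑ q, v q ^ 2))) := by
    rw [one_div, inv_mul_eq_div, le_div_iff₀ (by positivity)]
    linarith [hfin]
  have hδh0 : 0 < δ₀ * h := by positivity
  have hq : (2*(m:ℝ)+2) * δ₀ * h = Δ/4 * h := by rw [hδ₀eq]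
  have hrbound : (r:ℝ) ≤ (p:ℝ) * fmin * (δ₀*h) := by linarith [hr1]
  have he : (2*(m:ℝ)+1)*(δ₀*h) = Δ/4*h - δ₀*h := by linear_combination hq
  -- left block
  have hlhi : α + (2*(m:ℝ)+1)*(δ₀*h) ≤ 1 := by linarith [he, hgap, hβ1, hδh0.le, hΔh0.le]
  obtain ⟨J, hJmem, hJinj⟩ := block_select DQ hp0 r α (δ₀*h) hδh0 hα0 hlhi hrbound
  -- right block
  have hlo'0 : 0 ≤ β - Δ*h/4 := by linarith [hgap, hα0, hΔh0.le]
  have hlhi' : (β - Δ*h/4) + (2*(m:ℝ)+1)*(δ₀*h) ≤ 1 := by linarith [he, hδh0.le, hβ1]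
  obtain ⟨J', hJ'mem, hJ'inj⟩ := block_select DQ hp0 r (β - Δ*h/4) (δ₀*h) hδh0 hlo'0 hlhi' hrbound
  -- coordinate bounds
  have hJx : ∀ (i : Fin (m+1)) (s : Fin r),
      z.1 - Δ*h ≤ x (J i s) ∧ x (J i s) ≤ z.1 + Δ*h := by
    intro i s
    obtain ⟨hm1, hm2⟩ := hJmem i s
    have hi : ((i:ℕ):ℝ) ≤ m := by exact_mod_cast Fin.is_le i
    have hi0 : (0:ℝ) ≤ ((i:ℕ):ℝ) := Nat.cast_nonneg _
    have hprod0 : 0 ≤ 2*((i:ℕ):ℝ)*(δ₀*h) := by positivity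
    have hprod1 : 2*((i:ℕ):ℝ)*(δ₀*h) ≤ 2*(m:ℝ)*(δ₀*h) :=
      mul_le_mul_of_nonneg_right (by linarith [hi]) hδh0.le
    constructor
    · linarith [hαl]
    · linarith [he, hαz, hΔh0.le, hδh0.le]
  have hJ'x : ∀ (i : Fin (m+1)) (s : Fin r),
      z.2 - Δ*h ≤ x (J' i s) ∧ x (J' i s) ≤ z.2 + Δ*h := by
    intro i s
    obtain ⟨hm1, hm2⟩ := hJ'mem i s
    have hi : ((i:ℕ):ℝ) ≤ m := by exact_mod_cast Fin.is_le i
    have hi0 : (0:ℝ) ≤ ((i:ℕ):ℝ) := Nat.cast_nonneg _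
    have hprod0 : 0 ≤ 2*((i:ℕ):ℝ)*(δ₀*h) := by positivity
    have hprod1 : 2*((i:ℕ):ℝ)*(δ₀*h) ≤ 2*(m:ℝ)*(δ₀*h) :=
      mul_le_mul_of_nonneg_right (by linarith [hi]) hδh0.le
    constructor
    · linarith [hβz, hΔh0.le]
    · linarith [he, hβu, hδh0.le]
  -- ordering
  have horder : ∀ (i : Fin (m+1)) (s : Fin r) (i' : Fin (m+1)) (s' : Fin r),
      J i s < J' i' s' := by
    intro i s i' s'
    apply design_mono DQ hp0
    obtain ⟨hm1, hm2⟩ := hJmem i s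
    obtain ⟨hm1', hm2'⟩ := hJ'mem i' s'
    have hi : ((i:ℕ):ℝ) ≤ m := by exact_mod_cast Fin.is_le i
    have hi0' : (0:ℝ) ≤ ((i':ℕ):ℝ) := Nat.cast_nonneg _
    have hprod1 : 2*((i:ℕ):ℝ)*(δ₀*h) ≤ 2*(m:ℝ)*(δ₀*h) :=
      mul_le_mul_of_nonneg_right (by linarith [hi]) hδh0.le
    have hprod0 : 0 ≤ 2*((i':ℕ):ℝ)*(δ₀*h) := by positivity
    linarith [hgap, hΔh0, hδh0, he]
  -- grid configuration bounds (for any fixed s, s')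
  have hT1 : ∀ (s : Fin r) (i : Fin (m+1)), (x (J i s) - z.1)/h ∈ Icc (-Δ) Δ := by
    intro s i
    obtain ⟨g1, g2⟩ := hJx i s
    constructor
    · rw [le_div_iff₀ hh0]; linarith
    · rw [div_le_iff₀ hh0]; linarith
  have hT2 : ∀ (s : Fin r) (i i' : Fin (m+1)), i < i' →
      (x (J i s) - z.1)/h + δ₀ ≤ (x (J i' s) - z.1)/h := by
    intro s i i' hlt
    have hstep : x (J i s) + δ₀ * h ≤ x (J i' s) := by
      obtain ⟨g1, g2⟩ := hJmem i s
      obtain ⟨g1', g2'⟩ := hJmem i' s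
      have hcast : ((i:ℕ):ℝ) + 1 ≤ ((i':ℕ):ℝ) := by exact_mod_cast Nat.succ_le_of_lt hlt
      have hprod : (2*((i:ℕ):ℝ) + 2)*(δ₀*h) ≤ 2*((i':ℕ):ℝ)*(δ₀*h) :=
        mul_le_mul_of_nonneg_right (by linarith [hcast]) hδh0.le
      have hprod' : 2*((i:ℕ):ℝ)*(δ₀*h) + 2*(δ₀*h) ≤ 2*((i':ℕ):ℝ)*(δ₀*h) := by
        linarith [hprod]
      linarith [hδh0.le]
    have hdiv : (x (J i s) - z.1 + δ₀*h)/h ≤ (x (J i' s) - z.1)/h := by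
      apply div_le_div_of_nonneg_right ?_ hh0.le
      · linarith
    calc (x (J i s) - z.1)/h + δ₀ = (x (J i s) - z.1 + δ₀*h)/h := by field_simp
      _ ≤ _ := hdiv
  have hS1 : ∀ (s : Fin r) (i : Fin (m+1)), (x (J' i s) - z.2)/h ∈ Icc (-Δ) Δ := by
    intro s i
    obtain ⟨g1, g2⟩ := hJ'x i s
    constructor
    · rw [le_div_iff₀ hh0]; linarith
    · rw [div_le_iff₀ hh0]; linarith
  have hS2 : ∀ (s : Fin r) (i i' : Fin (m+1)), i < i' →
      (x (J' i s) - z.2)/h + δ₀ ≤ (x (J' i' s) - z.2)/h := by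
    intro s i i' hlt
    have hstep : x (J' i s) + δ₀ * h ≤ x (J' i' s) := by
      obtain ⟨g1, g2⟩ := hJ'mem i s
      obtain ⟨g1', g2'⟩ := hJ'mem i' s
      have hcast : ((i:ℕ):ℝ) + 1 ≤ ((i':ℕ):ℝ) := by exact_mod_cast Nat.succ_le_of_lt hlt
      have hprod : (2*((i:ℕ):ℝ) + 2)*(δ₀*h) ≤ 2*((i':ℕ):ℝ)*(δ₀*h) :=
        mul_le_mul_of_nonneg_right (by linarith [hcast]) hδh0.le
      have hprod' : 2*((i:ℕ):ℝ)*(δ₀*h) + 2*(δ₀*h) ≤ 2*((i':ℕ):ℝ)*(δ₀*h) := by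
        linarith [hprod]
      linarith [hδh0.le]
    have hdiv : (x (J' i s) - z.2 + δ₀*h)/h ≤ (x (J' i' s) - z.2)/h := by
      apply div_le_div_of_nonneg_right ?_ hh0.le
      · linarith
    calc (x (J' i s) - z.2)/h + δ₀ = (x (J' i s) - z.2 + δ₀*h)/h := by field_simp
      _ ≤ _ := hdiv
  -- normalization
  rw [quad_expand]
  by_cases hv0 : ∑ q, v q ^ 2 = 0
  · rw [hv0, mul_zero]
    apply mul_nonneg (by positivity)
    apply Finset.sum_nonneg; intro j _
    apply Finset.sum_nonneg; intro k _
    by_cases hjk : j < k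
    · simp only [hjk, if_true]; exact mul_nonneg (sq_nonneg _) (hK0 _)
    · simp [hjk]
  have hS : 0 < ∑ q, v q ^ 2 :=
    (Finset.sum_nonneg fun q _ => sq_nonneg _).lt_of_ne (Ne.symm hv0)
  -- grid bound with normalization folded in
  have hgrid2 : ∀ s s' : Fin r,
      lam' * (∑ q, v q ^ 2) ≤ ∑ i : Fin (m+1), ∑ i' : Fin (m+1),
        (∑ q, v q * Umon m q ((x (J i s) - z.1)/h, (x (J' i' s') - z.2)/h))^2 := by
    intro s s'
    have hsqrt : 0 < Real.sqrt (∑ q, v q ^ 2) := Real.sqrt_pos.mpr hS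
    have hw : ∑ q, (v q / Real.sqrt (∑ q', v q' ^ 2)) ^ 2 = 1 := by
      simp only [div_pow]
      rw [← Finset.sum_div, Real.sq_sqrt hS.le, div_self hv0]
    have hmain := Hgrid (fun i => (x (J i s) - z.1)/h) (fun i' => (x (J' i' s') - z.2)/h)
      (hT1 s) (hT2 s) (hS1 s') (hS2 s')
      (fun q => v q / Real.sqrt (∑ q', v q' ^ 2)) hw
    have hconv : ∀ i i' : Fin (m+1),
        (∑ q, (v q / Real.sqrt (∑ q', v q' ^ 2)) *
          Umon m q ((x (J i s) - z.1)/h, (x (J' i' s') - z.2)/h))^2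
        = (∑ q, v q * Umon m q ((x (J i s) - z.1)/h, (x (J' i' s') - z.2)/h))^2
            / (∑ q, v q ^ 2) := by
      intro i i'
      have e1 : ∑ q, (v q / Real.sqrt (∑ q', v q' ^ 2)) *
          Umon m q ((x (J i s) - z.1)/h, (x (J' i' s') - z.2)/h)
          = (∑ q, v q * Umon m q ((x (J i s) - z.1)/h, (x (J' i' s') - z.2)/h))
            / Real.sqrt (∑ q', v q' ^ 2) := by
        rw [Finset.sum_div]
        refine Finset.sum_congr rfl fun q _ => by ring
      rw [e1, div_pow, Real.sq_sqrt hS.le]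
    rw [show (∑ i : Fin (m+1), ∑ i' : Fin (m+1),
        (∑ q, (v q / Real.sqrt (∑ q', v q' ^ 2)) *
          Umon m q ((x (J i s) - z.1)/h, (x (J' i' s') - z.2)/h))^2)
      = (∑ i : Fin (m+1), ∑ i' : Fin (m+1),
        (∑ q, v q * Umon m q ((x (J i s) - z.1)/h, (x (J' i' s') - z.2)/h))^2)
          / (∑ q, v q ^ 2) from by
        rw [Finset.sum_div]
        exact Finset.sum_congr rfl fun i _ => by
          rw [Finset.sum_div]
          exact Finset.sum_congr rfl fun i' _ => hconv i i'] at hmain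
    rw [le_div_iff₀ hS] at hmain
    linarith [hmain]
  -- assemble: bound the double sum from below by the selected pairs
  set G : Fin p × Fin p → ℝ := fun jk => if jk.1 < jk.2 then
    (∑ q, v q * Umon m q ((x jk.1 - z.1)/h, (x jk.2 - z.2)/h))^2 *
      K ((x jk.1 - z.1)/h, (x jk.2 - z.2)/h) else 0 with hG_def
  have hGnn : ∀ jk, 0 ≤ G jk := by
    intro jk
    by_cases hjk : jk.1 < jk.2
    · simp only [hG_def, hjk, if_true]; exact mul_nonneg (sq_nonneg _) (hK0 _)
    · simp [hG_def, hjk]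
  have hsum_eq : ∑ j : Fin p, ∑ k : Fin p, (if j < k then
          (∑ q, v q * Umon m q ((x j - z.1)/h, (x k - z.2)/h))^2 *
            K ((x j - z.1)/h, (x k - z.2)/h) else 0)
      = ∑ jk : Fin p × Fin p, G jk := by
    rw [hG_def]
    exact (Fintype.sum_prod_type (fun jk : Fin p × Fin p =>
      if jk.1 < jk.2 then
        (∑ q, v q * Umon m q ((x jk.1 - z.1)/h, (x jk.2 - z.2)/h))^2 *
          K ((x jk.1 - z.1)/h, (x jk.2 - z.2)/h) else 0)).symm
  set φ : (Fin (m+1) × Fin r) × (Fin (m+1) × Fin r) → Fin p × Fin p :=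
    fun w => (J w.1.1 w.1.2, J' w.2.1 w.2.2) with hφ_def
  have hφinj : Function.Injective φ := by
    intro w1 w2 he
    have he1 : J w1.1.1 w1.1.2 = J w2.1.1 w2.1.2 := congrArg Prod.fst he
    have he2 : J' w1.2.1 w1.2.2 = J' w2.2.1 w2.2.2 := congrArg Prod.snd he
    have g1 : w1.1 = w2.1 := hJinj he1
    have g2 : w1.2 = w2.2 := hJ'inj he2
    exact Prod.ext g1 g2
  have hsub : ∑ w : (Fin (m+1) × Fin r) × (Fin (m+1) × Fin r), G (φ w)
      ≤ ∑ jk : Fin p × Fin p, G jk := by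
    rw [← Finset.sum_image (f := G) (g := φ) (fun a _ b _ hab => hφinj hab)]
    exact Finset.sum_le_sum_of_subset_of_nonneg (Finset.subset_univ _)
      (fun jk _ _ => hGnn jk)
  have hlow : ∀ w : (Fin (m+1) × Fin r) × (Fin (m+1) × Fin r),
      Kmin * (∑ q, v q * Umon m q
        ((x (J w.1.1 w.1.2) - z.1)/h, (x (J' w.2.1 w.2.2) - z.2)/h))^2 ≤ G (φ w) := by
    intro w
    have hjk : J w.1.1 w.1.2 < J' w.2.1 w.2.2 := horder _ _ _ _
    have hKge : Kmin ≤ K ((x (J w.1.1 w.1.2) - z.1)/h, (x (J' w.2.1 w.2.2) - z.2)/h) :=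
      (hKbd _).2 (hT1 w.1.2 w.1.1) (hS1 w.2.2 w.2.1)
    simp only [hG_def, hφ_def, hjk, if_true]
    calc Kmin * (∑ q, v q * Umon m q
          ((x (J w.1.1 w.1.2) - z.1)/h, (x (J' w.2.1 w.2.2) - z.2)/h))^2
        = (∑ q, v q * Umon m q
          ((x (J w.1.1 w.1.2) - z.1)/h, (x (J' w.2.1 w.2.2) - z.2)/h))^2 * Kmin := by ring
      _ ≤ _ := mul_le_mul_of_nonneg_left hKge (sq_nonneg _)
  have hsum_low : Kmin * ((r:ℝ)^2 * (lam' * ∑ q, v q ^ 2))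
      ≤ ∑ w : (Fin (m+1) × Fin r) × (Fin (m+1) × Fin r), G (φ w) :=
    calc Kmin * ((r:ℝ)^2 * (lam' * ∑ q, v q ^ 2))
        ≤ ∑ s : Fin r, ∑ s' : Fin r, Kmin * (lam' * ∑ q, v q ^ 2) := by
          rw [Finset.sum_const, Finset.sum_const, Finset.card_univ, Fintype.card_fin,
            nsmul_eq_mul, nsmul_eq_mul]
          exact le_of_eq (by ring)
      _ ≤ ∑ s : Fin r, ∑ s' : Fin r, ∑ i : Fin (m+1), ∑ i' : Fin (m+1),
            Kmin * (∑ q, v q * Umon m q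
              ((x (J i s) - z.1)/h, (x (J' i' s') - z.2)/h))^2 := by
          refine Finset.sum_le_sum fun s _ => Finset.sum_le_sum fun s' _ => ?_
          have hpull : ∑ i : Fin (m+1), ∑ i' : Fin (m+1),
              Kmin * (∑ q, v q * Umon m q
                ((x (J i s) - z.1)/h, (x (J' i' s') - z.2)/h))^2
              = Kmin * ∑ i : Fin (m+1), ∑ i' : Fin (m+1),
                (∑ q, v q * Umon m q
                  ((x (J i s) - z.1)/h, (x (J' i' s') - z.2)/h))^2 := by
            rw [Finset.mul_sum]
            exact Finset.sum_congr rfl fun i _ => (Finset.mul_sum _ _ _).symm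
          rw [hpull]
          exact mul_le_mul_of_nonneg_left (hgrid2 s s') hKmin.le
      _ = ∑ w : (Fin (m+1) × Fin r) × (Fin (m+1) × Fin r),
            Kmin * (∑ q, v q * Umon m q
              ((x (J w.1.1 w.1.2) - z.1)/h, (x (J' w.2.1 w.2.2) - z.2)/h))^2 :=
          (sum4 (fun i s i' s' => Kmin * (∑ q, v q * Umon m q
            ((x (J i s) - z.1)/h, (x (J' i' s') - z.2)/h))^2)).symm
      _ ≤ ∑ w : (Fin (m+1) × Fin r) × (Fin (m+1) × Fin r), G (φ w) :=
          Finset.sum_le_sum fun w _ => hlow w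
  have htotal : Kmin * ((r:ℝ)^2 * (lam' * ∑ q, v q ^ 2)) ≤ ∑ jk : Fin p × Fin p, G jk :=
    le_trans hsum_low hsub
  rw [hsum_eq]
  calc Kmin * lam' * (fmin*δ₀/2)^2 * ∑ q, v q ^ 2
      ≤ (1/((p:ℝ)*h)^2) * (Kmin * ((r:ℝ)^2 * (lam' * ∑ q, v q ^ 2))) := hnum
    _ ≤ (1/((p:ℝ)*h)^2) * ∑ jk : Fin p × Fin p, G jk :=
        mul_le_mul_of_nonneg_left htotal (by positivity)
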